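/- Let Θ : Aut(F_n) → GL_n(ℤ) be the homomorphism sending an automorphism φ to the matrix of the induced automorphism of the abelianization ℤ^n of F_n (so the j-th column of Θ(φ) is the image in ℤ^n of φ(x_j)). Then the image of Fix_c({x_{m+1}, …, x_n}) under Θ is exactly G_m, the subgroup {M ∈ GL_n(ℤ) : M e_j = e_j for all m+1 ≤ j ≤ n}. -/

import Mathlib

namespace FoldDecomp

open FreeGroup

variable {n : ℕ}
/-- `Fix(Y)` for `Y = {x_{m+1}, …, x_n}` (zero-indexed: the generators `xᵢ` with `m ≤ i`):
the subgroup of automorphisms fixing each element of `Y`. -/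
def fixSubgroup (n m : ℕ) : Subgroup (MulAut (FreeGroup (Fin n))) where
  carrier := {φ | ∀ i : Fin n, m ≤ (i : ℕ) → φ (of i) = of i}
  one_mem' := by intro i _; rfl
  mul_mem' := by
    intro a b ha hb i hi
    show a (b (of i)) = of i
    rw [hb i hi, ha i hi]
  inv_mem' := by
    intro a ha i hi
    show a⁻¹ (of i) = of i
    conv_lhs => rw [← ha i hi]
    exact a.left_inv _

/-- `Fix_c(Y)` for `Y = {x_{m+1}, …, x_n}` (zero-indexed: the generators `xᵢ` with `m ≤ i`):
the subgroup of automorphisms sending each element of `Y` to a conjugate of itself. -/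
def fixcSubgroup (n m : ℕ) : Subgroup (MulAut (FreeGroup (Fin n))) where
  carrier := {φ | ∀ i : Fin n, m ≤ (i : ℕ) → IsConj (of i) (φ (of i))}
  one_mem' := by intro i _; exact IsConj.refl _
  mul_mem' := by
    intro a b ha hb i hi
    show IsConj (of i) (a (b (of i)))
    exact (ha i hi).trans ((a : FreeGroup (Fin n) →* FreeGroup (Fin n)).map_isConj (hb i hi))
  inv_mem' := by
    intro a ha i hi
    show IsConj (of i) (a⁻¹ (of i))
    have h := ((a⁻¹ : MulAut (FreeGroup (Fin n))) :
      FreeGroup (Fin n) →* FreeGroup (Fin n)).map_isConj (ha i hi)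
    try simp only [MulEquiv.coe_toMonoidHom] at h
    rw [show ((a⁻¹ : MulAut (FreeGroup (Fin n))) : FreeGroup (Fin n) →* FreeGroup (Fin n))
      (a (of i)) = of i from MulAut.inv_apply_self _ a (of i)] at h
    exact h.symm

/-- `IA_n`: the subgroup of automorphisms acting trivially on the abelianization
`H₁(F_n)`. -/
def IA (n : ℕ) : Subgroup (MulAut (FreeGroup (Fin n))) where
  carrier := {φ | ∀ w : FreeGroup (Fin n),
    (Abelianization.of (φ w) : Abelianization (FreeGroup (Fin n))) = Abelianization.of w}
  one_mem' := by intro w; rfl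
  mul_mem' := by
    intro a b ha hb w
    show (Abelianization.of (a (b w)) : Abelianization (FreeGroup (Fin n))) = _
    rw [ha (b w), hb w]
  inv_mem' := by
    intro a ha w
    show (Abelianization.of (a⁻¹ w) : Abelianization (FreeGroup (Fin n))) = _
    have := ha (a⁻¹ w)
    rw [MulAut.apply_inv_self _ a w] at this
    exact this.symm

/-- The exponent sum of the generator `xᵢ` in a word of the free group, as a
homomorphism to `Multiplicative ℤ`. -/
def expSum (i : Fin n) : FreeGroup (Fin n) →* Multiplicative ℤ :=
  FreeGroup.lift fun k => Multiplicative.ofAdd (if k = i then (1 : ℤ) else 0)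

/-- `Θ` at the matrix level: the matrix of the automorphism of the abelianization `ℤⁿ`
induced by `φ`; its `j`-th column is the image in `ℤⁿ` of `φ(x_j)`. -/
def matOf (φ : MulAut (FreeGroup (Fin n))) : Matrix (Fin n) (Fin n) ℤ :=
  Matrix.of fun i j => Multiplicative.toAdd (expSum i (φ (FreeGroup.of j)))

-- AUX START
lemma expSum_of (i j : Fin n) :
    expSum i (of j) = Multiplicative.ofAdd (if j = i then (1:ℤ) else 0) :=
  FreeGroup.lift_apply_of

lemma matOf_apply (φ : MulAut (FreeGroup (Fin n))) (i j : Fin n) :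
    matOf φ i j = Multiplicative.toAdd (expSum i (φ (FreeGroup.of j))) := rfl

lemma expSum_aut (i : Fin n) (φ : MulAut (FreeGroup (Fin n))) (w : FreeGroup (Fin n)) :
    Multiplicative.toAdd (expSum i (φ w)) =
      ∑ t : Fin n, matOf φ i t * Multiplicative.toAdd (expSum t w) := by
  induction w using FreeGroup.induction_on with
  | C1 => simp
  | of x =>
    have : (pure x : FreeGroup (Fin n)) = of x := rfl
    simp only [this, matOf_apply, expSum_of]
    rw [Finset.sum_eq_single x]
    · simp
    · intro b _ hb; simp [hb.symm]
    · simp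
  | inv_of x ih =>
    simp only [_root_.map_inv, toAdd_inv, ih]
    rw [← Finset.sum_neg_distrib]
    congr 1; funext t; ring
  | mul x y ihx ihy =>
    simp only [_root_.map_mul, toAdd_mul, ihx, ihy, ← Finset.sum_add_distrib]
    congr 1; funext t; ring

lemma matOf_one : matOf (1 : MulAut (FreeGroup (Fin n))) = 1 := by
  ext i j
  simp only [matOf_apply, MulAut.one_apply, expSum_of, Matrix.one_apply, toAdd_ofAdd]
  by_cases h : i = j <;> simp [h, eq_comm]

lemma matOf_mul (φ ψ : MulAut (FreeGroup (Fin n))) :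
    matOf (φ * ψ) = matOf φ * matOf ψ := by
  ext i j
  rw [Matrix.mul_apply, matOf_apply, MulAut.mul_apply, expSum_aut]
  rfl



-- continuing
variable {n : ℕ}

/-- Build an automorphism of the free group from mutually inverse substitutions. -/
def mkAut (f g : Fin n → FreeGroup (Fin n))
    (h1 : ∀ x, FreeGroup.lift g (f x) = of x)
    (h2 : ∀ x, FreeGroup.lift f (g x) = of x) : MulAut (FreeGroup (Fin n)) where
  toFun := FreeGroup.lift f
  invFun := FreeGroup.lift g
  left_inv := by
    intro w
    have : (FreeGroup.lift g).comp (FreeGroup.lift f) = MonoidHom.id (FreeGroup (Fin n)) :=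
      FreeGroup.ext_hom _ _ (by intro a; simp [h1])
    exact DFunLike.congr_fun this w
  right_inv := by
    intro w
    have : (FreeGroup.lift f).comp (FreeGroup.lift g) = MonoidHom.id (FreeGroup (Fin n)) :=
      FreeGroup.ext_hom _ _ (by intro a; simp [h2])
    exact DFunLike.congr_fun this w
  map_mul' := map_mul _

lemma mkAut_apply_of (f g : Fin n → FreeGroup (Fin n)) (h1 h2) (x : Fin n) :
    mkAut f g h1 h2 (of x) = f x := FreeGroup.lift_apply_of

def nielsenF (i j : Fin n) (c : ℤ) : Fin n → FreeGroup (Fin n) :=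
  fun t => if t = j then of j * (of i) ^ c else of t

lemma toAdd_expSum_of (a b : Fin n) :
    Multiplicative.toAdd (expSum a (of b)) = if b = a then 1 else 0 := by
  rw [expSum_of]; rfl

lemma nielsen_aux (i j : Fin n) (hij : i ≠ j) (c d : ℤ) (hcd : c + d = 0) (x : Fin n) :
    FreeGroup.lift (nielsenF i j d) (nielsenF i j c x) = of x := by
  by_cases hx : x = j
  · rw [hx, show nielsenF i j c j = of j * (of i) ^ c from if_pos rfl,
      _root_.map_mul, map_zpow, FreeGroup.lift_apply_of, FreeGroup.lift_apply_of,
      show nielsenF i j d j = of j * (of i) ^ d from if_pos rfl,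
      show nielsenF i j d i = of i from if_neg hij,
      mul_assoc, ← zpow_add, show d + c = 0 by omega, zpow_zero, mul_one]
  · rw [show nielsenF i j c x = of x from if_neg hx, FreeGroup.lift_apply_of,
      show nielsenF i j d x = of x from if_neg hx]

def nielsen (i j : Fin n) (hij : i ≠ j) (c : ℤ) : MulAut (FreeGroup (Fin n)) :=
  mkAut (nielsenF i j c) (nielsenF i j (-c))
    (nielsen_aux i j hij c (-c) (by ring)) (nielsen_aux i j hij (-c) c (by ring))

def signF (i : Fin n) : Fin n → FreeGroup (Fin n) := fun t => if t = i then (of i)⁻¹ else of t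

lemma sign_aux (i : Fin n) (x : Fin n) :
    FreeGroup.lift (signF i) (signF i x) = of x := by
  unfold signF
  by_cases hx : x = i
  · subst hx; simp [FreeGroup.lift_apply_of]
  · simp [if_neg hx, FreeGroup.lift_apply_of]

def signAut (i : Fin n) : MulAut (FreeGroup (Fin n)) :=
  mkAut (signF i) (signF i) (sign_aux i) (sign_aux i)

lemma nielsen_mem (m : ℕ) (i j : Fin n) (hij : i ≠ j) (c : ℤ) (hj : (j : ℕ) < m) :
    nielsen i j hij c ∈ fixSubgroup n m := by
  intro t ht
  have htj : t ≠ j := by intro h; subst h; omega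
  show mkAut _ _ _ _ (of t) = of t
  rw [mkAut_apply_of]
  simp [nielsenF, if_neg htj]

lemma sign_mem (m : ℕ) (i : Fin n) (hi : (i : ℕ) < m) :
    signAut i ∈ fixSubgroup n m := by
  intro t ht
  have hti : t ≠ i := by intro h; subst h; omega
  show mkAut _ _ _ _ (of t) = of t
  rw [mkAut_apply_of]
  simp [signF, if_neg hti]

/-- identity matrix modified in column `j` by adding `w`. -/
def colmat (w : Fin n → ℤ) (j : Fin n) : Matrix (Fin n) (Fin n) ℤ :=
  Matrix.of fun a b => (if a = b then 1 else 0) + (if b = j then w a else 0)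

def signmat (i : Fin n) : Matrix (Fin n) (Fin n) ℤ :=
  Matrix.of fun a b => if a = b then (if a = i then -1 else 1) else 0

lemma matOf_nielsen (i j : Fin n) (hij : i ≠ j) (c : ℤ) :
    matOf (nielsen i j hij c) = colmat (Pi.single i c) j := by
  ext a b
  rw [matOf_apply, show (nielsen i j hij c) (of b) = nielsenF i j c b from
    mkAut_apply_of _ _ _ _ b]
  show Multiplicative.toAdd (expSum a (if b = j then of j * (of i) ^ c else of b)) =
    (if a = b then (1:ℤ) else 0) + (if b = j then (Pi.single i c : Fin n → ℤ) a else 0)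
  by_cases hb : b = j
  · rw [hb, if_pos rfl, if_pos rfl, _root_.map_mul, map_zpow, toAdd_mul, toAdd_zpow,
      toAdd_expSum_of, toAdd_expSum_of, Pi.single_apply]
    rcases eq_or_ne a j with h1 | h1 <;> rcases eq_or_ne a i with h2 | h2 <;>
      simp_all [eq_comm] <;> omega
  · rw [if_neg hb, if_neg hb, toAdd_expSum_of]
    rcases eq_or_ne a b with h1 | h1 <;> simp_all [eq_comm]

lemma matOf_sign (i : Fin n) : matOf (signAut i) = signmat i := by
  ext a b
  rw [matOf_apply, show (signAut i) (of b) = signF i b from mkAut_apply_of _ _ _ _ b]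
  show Multiplicative.toAdd (expSum a (if b = i then (of i)⁻¹ else of b)) =
    if a = b then (if a = i then (-1 : ℤ) else 1) else 0
  by_cases hb : b = i
  · rw [hb, if_pos rfl, _root_.map_inv, toAdd_inv, toAdd_expSum_of]
    rcases eq_or_ne a i with h1 | h1 <;> simp_all [eq_comm]
  · rw [if_neg hb, toAdd_expSum_of]
    rcases eq_or_ne a b with h1 | h1 <;> simp_all [eq_comm]


/-- The lifting predicate: `M` is the abelianization matrix of some automorphism
fixing the generators `xₜ`, `t ≥ m`. -/
def Pred (n m : ℕ) (M : Matrix (Fin n) (Fin n) ℤ) : Prop :=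
  ∃ φ ∈ fixSubgroup n m, matOf φ = M

lemma pred_one (n m : ℕ) : Pred n m 1 := ⟨1, one_mem _, matOf_one⟩

lemma pred_mul {n m : ℕ} {M N : Matrix (Fin n) (Fin n) ℤ}
    (hM : Pred n m M) (hN : Pred n m N) : Pred n m (M * N) := by
  obtain ⟨φ, hφ, rfl⟩ := hM; obtain ⟨ψ, hψ, rfl⟩ := hN
  exact ⟨φ * ψ, mul_mem hφ hψ, matOf_mul φ ψ⟩

lemma pred_nielsen {m : ℕ} {i j : Fin n} (hij : i ≠ j) (hj : (j : ℕ) < m) (c : ℤ) :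
    Pred n m (colmat (Pi.single i c) j) :=
  ⟨nielsen i j hij c, nielsen_mem m i j hij c hj, matOf_nielsen i j hij c⟩

lemma pred_sign {m : ℕ} {i : Fin n} (hi : (i : ℕ) < m) : Pred n m (signmat i) :=
  ⟨signAut i, sign_mem m i hi, matOf_sign i⟩

lemma colmat_apply (w : Fin n → ℤ) (j a b : Fin n) :
    colmat w j a b = (if a = b then 1 else 0) + (if b = j then w a else 0) := rfl

lemma colmat_zero (j : Fin n) : colmat (0 : Fin n → ℤ) j = 1 := by
  ext a b; simp [colmat, Matrix.one_apply]

lemma colmat_mul_apply (w : Fin n → ℤ) (j : Fin n) (M : Matrix (Fin n) (Fin n) ℤ) (a b : Fin n) :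
    (colmat w j * M) a b = M a b + w a * M j b := by
  rw [Matrix.mul_apply]
  have h : ∀ t, colmat w j a t * M t b =
      (if a = t then M t b else 0) + (if t = j then w a * M t b else 0) := by
    intro t
    rw [colmat_apply, add_mul]
    congr 1 <;> split_ifs <;> ring
  simp only [h, Finset.sum_add_distrib, Finset.sum_ite_eq, Finset.sum_ite_eq',
    Finset.mem_univ, if_true]

lemma mul_colmat_apply (M : Matrix (Fin n) (Fin n) ℤ) (w : Fin n → ℤ) (j : Fin n) (a b : Fin n) :
    (M * colmat w j) a b = M a b + (if b = j then ∑ t, M a t * w t else 0) := by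
  rw [Matrix.mul_apply]
  have h : ∀ t, M a t * colmat w j t b =
      (if t = b then M a t else 0) + (if b = j then M a t * w t else 0) := by
    intro t
    rw [colmat_apply, mul_add]
    congr 1 <;> split_ifs <;> ring
  rw [Finset.sum_congr rfl (fun t _ => h t), Finset.sum_add_distrib]
  congr 1
  · simp
  · split_ifs <;> simp

lemma signmat_apply (i a b : Fin n) :
    signmat i a b = if a = b then (if a = i then -1 else 1) else 0 := rfl

lemma mul_signmat_apply (M : Matrix (Fin n) (Fin n) ℤ) (i a b : Fin n) :
    (M * signmat i) a b = if b = i then -M a b else M a b := by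
  rw [Matrix.mul_apply]
  have h : ∀ t, M a t * signmat i t b =
      if t = b then (if b = i then -M a t else M a t) else 0 := by
    intro t
    rw [signmat_apply]
    split_ifs <;> simp_all <;> ring
  rw [Finset.sum_congr rfl (fun t _ => h t), Finset.sum_ite_eq']
  simp

lemma signmat_mul_signmat (i : Fin n) : signmat i * signmat i = 1 := by
  ext a b
  rw [mul_signmat_apply, signmat_apply, Matrix.one_apply]
  split_ifs <;> simp_all

lemma colmat_mul_colmat (u v : Fin n → ℤ) (j : Fin n) (hv : v j = 0) :
    colmat u j * colmat v j = colmat (u + v) j := by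
  ext a b
  simp only [colmat_mul_apply, colmat_apply, Pi.add_apply]
  by_cases hbj : b = j
  · simp [hbj, hv]; ring
  · simp [hbj]
    intro h; exact absurd h.symm hbj

lemma pred_colmat {m : ℕ} {j : Fin n} (hj : (j : ℕ) < m) (w : Fin n → ℤ) (hw : w j = 0) :
    Pred n m (colmat w j) := by
  classical
  have key : ∀ s : Finset (Fin n), ∀ w : Fin n → ℤ, w j = 0 → (∀ a, a ∉ s → w a = 0) →
      Pred n m (colmat w j) := by
    intro s
    induction s using Finset.induction_on with
    | empty =>
      intro w hwj hsupp
      have hw0 : w = 0 := funext fun a => hsupp a (Finset.notMem_empty a)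
      rw [hw0, colmat_zero]; exact pred_one n m
    | @insert i s his ih =>
      intro w hwj hsupp
      by_cases hij : i = j
      · refine ih w hwj (fun a ha => ?_)
        by_cases hai : a = i
        · rw [hai, hij]; exact hwj
        · exact hsupp a (by simp [hai, ha])
      · have hsj : (Pi.single i (w i) : Fin n → ℤ) j = 0 :=
          Pi.single_eq_of_ne (fun h => hij h.symm) _
        have hsum : Function.update w i 0 + Pi.single i (w i) = w := by
          funext a
          rw [Pi.add_apply, Function.update_apply, Pi.single_apply]
          by_cases hai : a = i <;> simp [hai]
        have hdecomp : colmat w j =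
            colmat (Function.update w i 0) j * colmat (Pi.single i (w i)) j := by
          rw [colmat_mul_colmat _ _ _ hsj, hsum]
        rw [hdecomp]
        refine pred_mul (ih _ ?_ ?_) (pred_nielsen hij hj (w i))
        · rw [Function.update_apply, if_neg (fun h => hij h.symm)]; exact hwj
        · intro a ha
          rw [Function.update_apply]
          by_cases hai : a = i
          · simp [hai]
          · rw [if_neg hai]; exact hsupp a (by simp [hai, ha])
  exact key Finset.univ w hw (fun a ha => absurd (Finset.mem_univ a) ha)

lemma neg_apply_zero {w : Fin n → ℤ} {j : Fin n} (hw : w j = 0) : (-w) j = 0 := by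
  simp [hw]

lemma pred_of_mul_colmat {m : ℕ} {j : Fin n} (hj : (j : ℕ) < m) {w : Fin n → ℤ}
    (hw : w j = 0) {M : Matrix (Fin n) (Fin n) ℤ}
    (h : Pred n m (M * colmat w j)) : Pred n m M := by
  have h2 := pred_mul h (pred_colmat hj (-w) (neg_apply_zero hw))
  rwa [Matrix.mul_assoc, colmat_mul_colmat _ _ _ (neg_apply_zero hw),
    show w + -w = 0 from by funext a; simp, colmat_zero, Matrix.mul_one] at h2

lemma pred_of_colmat_mul {m : ℕ} {j : Fin n} (hj : (j : ℕ) < m) {w : Fin n → ℤ}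
    (hw : w j = 0) {M : Matrix (Fin n) (Fin n) ℤ}
    (h : Pred n m (colmat w j * M)) : Pred n m M := by
  have h2 := pred_mul (pred_colmat hj (-w) (neg_apply_zero hw)) h
  rwa [← Matrix.mul_assoc, colmat_mul_colmat _ _ _ hw,
    show -w + w = 0 from by funext a; simp, colmat_zero, Matrix.one_mul] at h2

lemma pred_of_mul_signmat {m : ℕ} {i : Fin n} (hi : (i : ℕ) < m)
    {M : Matrix (Fin n) (Fin n) ℤ}
    (h : Pred n m (M * signmat i)) : Pred n m M := by
  have h2 := pred_mul h (pred_sign hi)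
  rwa [Matrix.mul_assoc, signmat_mul_signmat, Matrix.mul_one] at h2

lemma isUnit_colmat {w : Fin n → ℤ} {j : Fin n} (hw : w j = 0) : IsUnit (colmat w j) := by
  refine ⟨⟨colmat w j, colmat (-w) j, ?_, ?_⟩, rfl⟩
  · rw [colmat_mul_colmat _ _ _ (neg_apply_zero hw),
      show w + -w = 0 from by funext a; simp, colmat_zero]
  · rw [colmat_mul_colmat _ _ _ hw,
      show -w + w = 0 from by funext a; simp, colmat_zero]

lemma isUnit_signmat (i : Fin n) : IsUnit (signmat i) :=
  ⟨⟨signmat i, signmat i, signmat_mul_signmat i, signmat_mul_signmat i⟩, rfl⟩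



lemma natAbs_emod_lt' (a b : ℤ) (h : b ≠ 0) : (a % b).natAbs < b.natAbs := by
  have h1 : 0 ≤ a % b := Int.emod_nonneg a h
  have h2 : a % b < |b| := by rw [Int.abs_eq_natAbs]; exact Int.emod_lt a h
  rw [Int.abs_eq_natAbs] at h2
  omega

lemma single_colmat_mul_apply (q : Fin n) (c : ℤ) (r : Fin n)
    (M : Matrix (Fin n) (Fin n) ℤ) (a b : Fin n) :
    (colmat (Pi.single q c) r * M) a b = M a b + (if a = q then c else 0) * M r b := by
  rw [colmat_mul_apply, Pi.single_apply]

/-- One full Euclidean gcd run on the pair of entries `(p, kk)`, `(q, kk)`, using row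
operations supported on rows `p` and `q`, ending with a zero in position `(p, kk)`. -/
lemma zeroPair {m : ℕ} : ∀ (B : ℕ) (M : Matrix (Fin n) (Fin n) ℤ) (p q kk : Fin n),
    p ≠ q → (p : ℕ) < m → (q : ℕ) < m → (M p kk).natAbs ≤ B →
    ∃ M' : Matrix (Fin n) (Fin n) ℤ,
      (Pred n m M' → Pred n m M) ∧ (IsUnit M → IsUnit M') ∧
      M' p kk = 0 ∧
      (∀ a b, a ≠ p → a ≠ q → M' a b = M a b) ∧
      (∀ b, M p b = 0 → M q b = 0 → M' p b = 0 ∧ M' q b = 0) := by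
  intro B
  induction B using Nat.strong_induction_on with
  | _ B ih =>
  intro M p q kk hpq hp hq hB
  by_cases h0 : M p kk = 0
  · exact ⟨M, id, id, h0, fun _ _ _ _ => rfl, fun b h1 h2 => ⟨h1, h2⟩⟩
  · have hqp : q ≠ p := hpq.symm
    have hsqp : (Pi.single q (-(M q kk / M p kk)) : Fin n → ℤ) p = 0 :=
      Pi.single_eq_of_ne hpq _
    set c : ℤ := -(M q kk / M p kk) with hc
    set N : Matrix (Fin n) (Fin n) ℤ := colmat (Pi.single q c) p * M with hNdef
    have hNapp : ∀ a b, N a b = M a b + (if a = q then c else 0) * M p b := by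
      intro a b; rw [hNdef, single_colmat_mul_apply]
    have hNrow : ∀ a b, a ≠ q → N a b = M a b := by
      intro a b ha; rw [hNapp, if_neg ha, zero_mul, add_zero]
    have hNq : ∀ b, N q b = M q b + c * M p b := by
      intro b; rw [hNapp, if_pos rfl]
    have hNqkk : N q kk = M q kk % M p kk := by
      rw [hNq, hc, Int.emod_def]; ring
    have hlt : (N q kk).natAbs < B :=
      lt_of_lt_of_le (hNqkk ▸ natAbs_emod_lt' _ _ h0) hB
    obtain ⟨N', hN'pred, hN'unit, hN'qkk, hN'row, hN'zero⟩ :=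
      ih (N q kk).natAbs hlt N q p kk hqp hq hp le_rfl
    -- transfer: row q += row p ; then row p -= row q
    have hsq1p : (Pi.single q (1 : ℤ) : Fin n → ℤ) p = 0 := Pi.single_eq_of_ne hpq _
    have hspq : (Pi.single p (-1 : ℤ) : Fin n → ℤ) q = 0 := Pi.single_eq_of_ne hqp _
    set T1 : Matrix (Fin n) (Fin n) ℤ := colmat (Pi.single q 1) p * N' with hT1def
    set T2 : Matrix (Fin n) (Fin n) ℤ := colmat (Pi.single p (-1)) q * T1 with hT2def
    have hT1app : ∀ a b, T1 a b = N' a b + (if a = q then (1:ℤ) else 0) * N' p b := by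
      intro a b; rw [hT1def, single_colmat_mul_apply]
    have hT2app : ∀ a b, T2 a b = T1 a b + (if a = p then (-1:ℤ) else 0) * T1 q b := by
      intro a b; rw [hT2def, single_colmat_mul_apply]
    have hT1row : ∀ a b, a ≠ q → T1 a b = N' a b := by
      intro a b ha; rw [hT1app, if_neg ha, zero_mul, add_zero]
    have hT2row : ∀ a b, a ≠ p → T2 a b = T1 a b := by
      intro a b ha; rw [hT2app, if_neg ha, zero_mul, add_zero]
    have hT1q : ∀ b, T1 q b = N' q b + N' p b := by
      intro b; rw [hT1app, if_pos rfl, one_mul]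
    have hT2p : ∀ b, T2 p b = -(N' q b) := by
      intro b; rw [hT2app, if_pos rfl, hT1row p b hpq, hT1q]; ring
    refine ⟨T2, ?_, ?_, ?_, ?_, ?_⟩
    · intro h
      have h1 : Pred n m T1 := pred_of_colmat_mul hq hspq (hT2def ▸ h)
      have h2 : Pred n m N' := pred_of_colmat_mul hp hsq1p (hT1def ▸ h1)
      have h3 : Pred n m N := hN'pred h2
      exact pred_of_colmat_mul hp hsqp (hNdef ▸ h3)
    · intro h
      have h1 : IsUnit N := (isUnit_colmat hsqp).mul h
      have h2 : IsUnit N' := hN'unit h1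
      exact (isUnit_colmat hspq).mul ((isUnit_colmat hsq1p).mul h2)
    · rw [hT2p, hN'qkk, neg_zero]
    · intro a b hap haq
      rw [hT2row a b hap, hT1row a b haq, hN'row a b haq hap, hNrow a b haq]
    · intro b h1 h2
      have hN1 : N p b = 0 := by rw [hNrow p b hpq]; exact h1
      have hN2 : N q b = 0 := by rw [hNq, h1, h2]; ring
      obtain ⟨hz1, hz2⟩ := hN'zero b hN2 hN1
      constructor
      · rw [hT2p, hz1, neg_zero]
      · rw [hT2row q b hqp, hT1q, hz1, hz2, add_zero]

/-- Main reduction: a unit matrix whose columns `j ≥ k` are standard basis vectors is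
the abelianization matrix of an automorphism fixing the generators `≥ m`. -/
lemma mainRed {m : ℕ} (hmn : m ≤ n) : ∀ k, k ≤ m → ∀ M : Matrix (Fin n) (Fin n) ℤ,
    IsUnit M → (∀ j : Fin n, k ≤ (j : ℕ) → ∀ a, M a j = if a = j then 1 else 0) →
    Pred n m M := by
  intro k
  induction k with
  | zero =>
    intro _ M hu hcol
    have hM1 : M = 1 := by
      ext a b
      rw [hcol b (Nat.zero_le _) a, Matrix.one_apply]
    rw [hM1]; exact pred_one n m
  | succ k ihk =>
    intro hkm M hM hcol
    have hkm' : k < m := hkm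
    have hkn : k < n := lt_of_lt_of_le hkm' hmn
    set kk : Fin n := ⟨k, hkn⟩ with hkk
    have hkkv : (kk : ℕ) = k := rfl
    -- Step 2 engine (zero out the entries (i, kk), i ∈ s, of matrices whose other
    -- off-diagonal entries of column kk vanish)
    have step2 : ∀ s : Finset (Fin n), (∀ i ∈ s, (i : ℕ) < k) →
        ∀ X : Matrix (Fin n) (Fin n) ℤ, IsUnit X →
        (∀ j : Fin n, k + 1 ≤ (j : ℕ) → ∀ a, X a j = if a = j then 1 else 0) →
        (∀ a : Fin n, a ≠ kk → a ∉ s → X a kk = 0) → Pred n m X := by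
      intro s
      induction s using Finset.induction_on with
      | empty =>
        intro _ X hX hXcol hXz
        obtain ⟨u, hu⟩ := id hX
        have hNX : (↑u⁻¹ : Matrix (Fin n) (Fin n) ℤ) * X = 1 := by rw [← hu]; exact u.inv_mul
        have hdiag : (↑u⁻¹ : Matrix (Fin n) (Fin n) ℤ) kk kk * X kk kk = 1 := by
          have h := congrFun (congrFun hNX kk) kk
          rw [Matrix.mul_apply, Matrix.one_apply_eq] at h
          have hsum1 : ∑ t, (↑u⁻¹ : Matrix (Fin n) (Fin n) ℤ) kk t * X t kk
              = (↑u⁻¹ : Matrix (Fin n) (Fin n) ℤ) kk kk * X kk kk := by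
            refine Finset.sum_eq_single kk (fun t _ ht => ?_)
              (fun hh => absurd (Finset.mem_univ kk) hh)
            rw [hXz t ht (Finset.notMem_empty t), mul_zero]
          rw [← hsum1]; exact h
        have hdu : IsUnit (X kk kk) :=
          IsUnit.of_mul_eq_one _ (by rw [mul_comm] at hdiag; exact hdiag)
        have hcolkk : ∀ a, a ≠ kk → X a kk = 0 := fun a ha =>
          hXz a ha (Finset.notMem_empty a)
        rcases Int.isUnit_iff.mp hdu with hd | hd
        · refine ihk (Nat.le_of_succ_le hkm) X hX ?_
          intro j hj a
          rcases Nat.lt_or_ge (j : ℕ) (k + 1) with hjk | hjk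
          · have hjkk : j = kk := Fin.ext (by omega)
            rw [hjkk]
            by_cases hak : a = kk
            · rw [hak, if_pos rfl, hd]
            · rw [if_neg hak, hcolkk a hak]
          · exact hXcol j hjk a
        · have hXs : Pred n m (X * signmat kk) := by
            refine ihk (Nat.le_of_succ_le hkm) _ (hX.mul (isUnit_signmat kk)) ?_
            intro j hj a
            rw [mul_signmat_apply]
            rcases Nat.lt_or_ge (j : ℕ) (k + 1) with hjk | hjk
            · have hjkk : j = kk := Fin.ext (by omega)
              rw [hjkk, if_pos rfl]
              by_cases hak : a = kk
              · rw [hak, if_pos rfl, hd]; ring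
              · rw [if_neg hak, hcolkk a hak, neg_zero]
            · have hjne : j ≠ kk := by
                intro h; rw [h] at hjk; omega
              rw [if_neg hjne]
              exact hXcol j hjk a
          exact pred_of_mul_signmat (hkkv ▸ hkm') hXs
      | @insert i s his ihs =>
        intro hsb X hX hXcol hXz
        have hik : (i : ℕ) < k := hsb i (Finset.mem_insert_self i s)
        have hikk : i ≠ kk := by
          intro h; rw [h] at hik; omega
        obtain ⟨X', hX'pred, hX'unit, hX'ikk, hX'row, hX'zero⟩ :=
          zeroPair (X i kk).natAbs X i kk kk hikk (by omega) (hkkv ▸ hkm') le_rfl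
        refine hX'pred (ihs (fun t ht => hsb t (Finset.mem_insert_of_mem ht)) X'
          (hX'unit hX) ?_ ?_)
        · intro j hj a
          have hjik : j ≠ i := by intro h; rw [h] at hj; omega
          have hjkk : j ≠ kk := by intro h; rw [h] at hj; omega
          have h1 : X i j = 0 := by
            rw [hXcol j hj i]; exact if_neg (fun h : i = j => hjik h.symm)
          have h2 : X kk j = 0 := by
            rw [hXcol j hj kk]; exact if_neg (fun h : kk = j => hjkk h.symm)
          by_cases hai : a = i
          · rw [hai, (hX'zero j h1 h2).1, if_neg (fun h : i = j => hjik h.symm)]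
          · by_cases hak : a = kk
            · rw [hak, (hX'zero j h1 h2).2, if_neg (fun h : kk = j => hjkk h.symm)]
            · rw [hX'row a j hai hak]
              exact hXcol j hj a
        · intro a hakk has
          by_cases hai : a = i
          · rw [hai]; exact hX'ikk
          · rw [hX'row a kk hai hakk]
            exact hXz a hakk (by simp [hai, has])
    -- Step 1: clear the entries of column kk below the diagonal
    set w : Fin n → ℤ := fun t => if k < (t : ℕ) then -(M t kk) else 0 with hwdef
    have hwkk : w kk = 0 := by simp [hwdef, hkkv]
    have hsum : ∀ a, ∑ t, M a t * w t = if k < (a : ℕ) then -(M a kk) else 0 := by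
      intro a
      have hwval : ∀ t : Fin n, w t = if k < (t : ℕ) then -(M t kk) else 0 := fun t => rfl
      rw [show (if k < (a : ℕ) then -(M a kk) else 0) =
          ∑ t, (if t = a then (if k < (t : ℕ) then -(M t kk) else 0) else 0) from by
        rw [Finset.sum_ite_eq' Finset.univ a]; simp]
      refine Finset.sum_congr rfl (fun t _ => ?_)
      by_cases htk : k < (t : ℕ)
      · rw [hwval t, if_pos htk, hcol t htk a]
        by_cases hta : t = a
        · simp [hta, htk]
        · simp [hta, Ne.symm hta]
      · rw [hwval t, if_neg htk, mul_zero]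
        by_cases hta : t = a <;> simp [hta, htk]
    set M1 : Matrix (Fin n) (Fin n) ℤ := M * colmat w kk with hM1def
    have hM1app : ∀ a b, M1 a b = M a b + (if b = kk then ∑ t, M a t * w t else 0) := by
      intro a b; rw [hM1def, mul_colmat_apply]
    have hM1col : ∀ a b, b ≠ kk → M1 a b = M a b := by
      intro a b hb; rw [hM1app, if_neg hb, add_zero]
    have hM1kk : ∀ a, M1 a kk = M a kk + (if k < (a : ℕ) then -(M a kk) else 0) := by
      intro a; rw [hM1app, if_pos rfl, hsum]
    have hPred1 : Pred n m M1 := by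
      refine step2 (Finset.univ.filter (fun i => (i : ℕ) < k)) ?_ M1
        (hM.mul (isUnit_colmat hwkk)) ?_ ?_
      · intro i hi; exact (Finset.mem_filter.mp hi).2
      · intro j hj a
        have hjkk : j ≠ kk := by intro h; rw [h] at hj; omega
        rw [hM1col a j hjkk]
        exact hcol j (by omega) a
      · intro a hakk has
        have hak : k < (a : ℕ) := by
          rcases Nat.lt_or_ge k (a : ℕ) with h | h
          · exact h
          · exfalso
            rcases Nat.lt_or_ge (a : ℕ) k with h2 | h2
            · exact has (Finset.mem_filter.mpr ⟨Finset.mem_univ a, h2⟩)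
            · exact hakk (Fin.ext (by omega))
        rw [hM1kk, if_pos hak]; ring
    exact pred_of_mul_colmat (hkkv ▸ hkm') hwkk (hM1def ▸ hPred1)


-- AUX END

/-- The image of `Fix_c({x_{m+1}, …, x_n})` under `Θ : Aut(F_n) → GL_n(ℤ)` is exactly
`G_m = {M ∈ GL_n(ℤ) : M eⱼ = eⱼ for all j > m}` (zero-indexed: `m ≤ j`). -/
theorem theta_image_fixc (n m : ℕ) (hm : m ≤ n) :
    matOf '' (fixcSubgroup n m : Set (MulAut (FreeGroup (Fin n)))) =
      {M : Matrix (Fin n) (Fin n) ℤ | IsUnit M ∧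
        ∀ j : Fin n, m ≤ (j : ℕ) → M.mulVec (Pi.single j 1) = Pi.single j 1} := by
  ext M
  constructor
  · rintro ⟨φ, hφ, rfl⟩
    constructor
    · refine ⟨⟨matOf φ, matOf φ⁻¹, ?_, ?_⟩, rfl⟩
      · rw [← matOf_mul, mul_inv_cancel, matOf_one]
      · rw [← matOf_mul, inv_mul_cancel, matOf_one]
    · intro j hj
      have hc : IsConj (of j) (φ (of j)) := hφ j hj
      obtain ⟨c, hc2⟩ := isConj_iff.mp hc
      funext a
      have h1 : (matOf φ).mulVec (Pi.single j 1) a = matOf φ a j * 1 :=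
        congrFun (Matrix.mulVec_single _ _ _) a
      have h3 : expSum a (φ (of j)) = expSum a (of j) := by
        rw [← hc2, _root_.map_mul, _root_.map_mul, _root_.map_inv,
          mul_comm ((expSum a) c) ((expSum a) (of j)), mul_assoc, mul_inv_cancel, mul_one]
      have h2 : matOf φ a j = if j = a then 1 else 0 := by
        rw [matOf_apply, h3, toAdd_expSum_of]
      rw [h1, h2, mul_one, Pi.single_apply]
      by_cases haj : a = j
      · rw [if_pos haj, if_pos haj.symm]
      · rw [if_neg haj, if_neg (fun h : j = a => haj h.symm)]
  · rintro ⟨hunit, hcols⟩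
    have hcols' : ∀ j : Fin n, m ≤ (j : ℕ) → ∀ a, M a j = if a = j then 1 else 0 := by
      intro j hj a
      have h2 := congrFun (hcols j hj) a
      have h1 : M.mulVec (Pi.single j 1) a = M a j * 1 :=
        congrFun (Matrix.mulVec_single _ _ _) a
      rw [h1, mul_one] at h2
      rw [h2, Pi.single_apply]
    obtain ⟨φ, hφ, hmat⟩ := mainRed hm m le_rfl M hunit hcols'
    refine ⟨φ, ?_, hmat⟩
    intro i hi
    show IsConj (of i) (φ (of i))
    rw [show φ (of i) = of i from hφ i hi]

end FoldDecomp
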